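/- arXiv:math/0608575 — 8 statements merged into one kernel-verified Lean document; each statement's English description precedes it below -/
import Mathlib

section
/- Every SUC function on a topological group G is both left and right uniformly continuous. -/
open Filter Topology

universe u

variable (G : Type u) [Group G] [TopologicalSpace G]

/-- A compact (more generally, uniform) `G`-flow is strongly uniformly continuous (SUC):
for every point `x₀` and every entourage `ε` there is a neighborhood `U` of the identity
such that `(g • (u • x₀), g • x₀) ∈ ε` for all `g ∈ G` and `u ∈ U`. -/
def IsSUCFlow (X : Type u) [UniformSpace X] [MulAction G X] : Prop :=
  ∀ x₀ : X, ∀ ε ∈ uniformity X, ∃ U ∈ nhds (1 : G), ∀ g : G, ∀ u ∈ U,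
    (g • u • x₀, g • x₀) ∈ ε

/-- `f : G → ℝ` is an SUC function: it comes from a compact SUC `G`-flow. -/
def IsSUCFunction (f : G → ℝ) : Prop :=
  ∃ (X : Type u) (_ : UniformSpace X) (_ : CompactSpace X) (_ : T2Space X)
    (_ : MulAction G X) (_ : ContinuousSMul G X),
    IsSUCFlow G X ∧ ∃ (x₀ : X) (F : X → ℝ), Continuous F ∧ ∀ g : G, f g = F (g • x₀)

/-- `f` is right uniformly continuous. -/
def RightUC (f : G → ℝ) : Prop :=
  ∀ ε : ℝ, 0 < ε → ∃ U ∈ nhds (1 : G), ∀ u ∈ U, ∀ g : G, |f (u * g) - f g| < ε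

/-- `f` is left uniformly continuous. -/
def LeftUC (f : G → ℝ) : Prop :=
  ∀ ε : ℝ, 0 < ε → ∃ U ∈ nhds (1 : G), ∀ u ∈ U, ∀ g : G, |f (g * u) - f g| < ε

/-- Every SUC function on a topological group `G` is both left and right
uniformly continuous. -/
theorem statement1 [IsTopologicalGroup G] (f : G → ℝ) (hbd : ∃ M : ℝ, ∀ g : G, |f g| ≤ M)
    (hf : IsSUCFunction G f) : LeftUC G f ∧ RightUC G f := by
  obtain ⟨X, _, _, _, _, _, hSUC, x₀, F, hF, hfF⟩ := hf
  have hUC : UniformContinuous F := CompactSpace.uniformContinuous_of_continuous hF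
  constructor
  · -- Left uniform continuity, from the SUC property
    intro ε hε
    have hent : {p : X × X | |F p.1 - F p.2| < ε} ∈ uniformity X := by
      have h := hUC (Metric.dist_mem_uniformity hε)
      simpa [Real.dist_eq] using h
    obtain ⟨U, hU, hUε⟩ := hSUC x₀ _ hent
    refine ⟨U, hU, fun u hu g => ?_⟩
    have := hUε g u hu
    simp only [Set.mem_setOf_eq] at this
    rw [hfF (g * u), hfF g, mul_smul]
    exact this
  · -- Right uniform continuity, from compactness (tube lemma)
    intro ε hε
    set N : Set (G × X) := {p | |F (p.1 • p.2) - F p.2| < ε} with hN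
    have hopen : IsOpen N := by
      have hc : Continuous fun p : G × X => |F (p.1 • p.2) - F p.2| := by
        apply Continuous.abs
        exact (hF.comp continuous_smul).sub (hF.comp continuous_snd)
      exact isOpen_lt hc continuous_const
    have hsub : ({1} : Set G) ×ˢ (Set.univ : Set X) ⊆ N := by
      rintro ⟨u, x⟩ ⟨hu, -⟩
      simp only [Set.mem_singleton_iff] at hu
      simp [N, hu, hε]
    obtain ⟨U, V, hUo, hVo, hUs, hVs, hUV⟩ :=
      generalized_tube_lemma isCompact_singleton isCompact_univ hopen hsub
    refine ⟨U, hUo.mem_nhds (hUs rfl), fun u hu g => ?_⟩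
    have : (u, g • x₀) ∈ N := hUV ⟨hu, hVs (Set.mem_univ _)⟩
    simp only [N, Set.mem_setOf_eq] at this
    rw [hfF (u * g), hfF g, mul_smul]
    exact this
end

section
/- Let (X, 𝒰) be a uniform space carrying an action of a topological group G that is jointly continuous with respect to the topology of 𝒰, and let x₀ ∈ X. Assume x₀ is a point of local equicontinuity, i.e. for every entourage ε ∈ 𝒰 there is a set O containing x₀ and open in the subspace G•x₀ such that (g•x, g•x₀) ∈ ε for all x ∈ O and all g ∈ G. Then x₀ is an SUC point of X: for every ε ∈ 𝒰 there is a neighborhood U of the identity e ∈ G such that (g•(u•x₀), g•x₀) ∈ ε for all g ∈ G and all u ∈ U. -/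
open Filter Topology

/-- In a uniform `G`-space, every point of local equicontinuity
(equicontinuity point of the closure of its orbit, here expressed via relatively open
subsets of the orbit `G • x₀`) is an SUC point. -/
theorem statement2 {G X : Type*} [Group G] [TopologicalSpace G] [IsTopologicalGroup G]
    [UniformSpace X] [MulAction G X] [ContinuousSMul G X] (x₀ : X)
    (hLE : ∀ ε ∈ uniformity X, ∃ V : Set X, IsOpen V ∧ x₀ ∈ V ∧
      ∀ x ∈ V ∩ MulAction.orbit G x₀, ∀ g : G, (g • x, g • x₀) ∈ ε) :
    ∀ ε ∈ uniformity X, ∃ U ∈ nhds (1 : G), ∀ g : G, ∀ u ∈ U,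
      (g • u • x₀, g • x₀) ∈ ε := by
  intro ε hε
  obtain ⟨V, hVopen, hx₀V, hV⟩ := hLE ε hε
  refine ⟨(fun u : G => u • x₀) ⁻¹' V, ?_, ?_⟩
  · exact (hVopen.preimage (continuous_id.smul continuous_const)).mem_nhds (by simpa using hx₀V)
  · intro g u hu
    exact hV (u • x₀) ⟨hu, ⟨u, rfl⟩⟩ g
end

section
/- Let G be a topological group, X a compact G-flow and f : X → ℝ continuous. The following are equivalent: (1) there exist a compact SUC G-flow Y, a continuous G-equivariant map ν : X → Y and a continuous function F : Y → ℝ with f = F ∘ ν; (2) for every x₀ ∈ X and every ε > 0 there exists a neighborhood U of the identity e ∈ G such that |f(g•(u•x₀)) − f(g•x₀)| < ε for all g ∈ G and all u ∈ U. -/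
open Filter Topology

open Uniformity

universe u

variable (G : Type u) [Group G] [TopologicalSpace G]

/-- For a compact `G`-flow `X` and continuous `f : X → ℝ`, `f` comes from a
compact SUC `G`-flow via a continuous `G`-map iff for every `x₀ ∈ X` and `ε > 0` there is
a neighborhood `U` of the identity with `|f (g • (u • x₀)) − f (g • x₀)| < ε` for all
`g ∈ G`, `u ∈ U`. -/
theorem statement3 [IsTopologicalGroup G] {X : Type u} [TopologicalSpace X] [CompactSpace X]
    [T2Space X] [MulAction G X] [ContinuousSMul G X] (f : X → ℝ) (hf : Continuous f) :
    (∃ (Y : Type u) (_ : UniformSpace Y) (_ : CompactSpace Y) (_ : T2Space Y)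
      (_ : MulAction G Y) (_ : ContinuousSMul G Y),
      IsSUCFlow G Y ∧ ∃ (ν : X → Y) (F : Y → ℝ),
        Continuous ν ∧ (∀ (g : G) (x : X), ν (g • x) = g • ν x) ∧
        Continuous F ∧ f = F ∘ ν) ↔
    (∀ x₀ : X, ∀ ε : ℝ, 0 < ε → ∃ U ∈ nhds (1 : G), ∀ g : G, ∀ u ∈ U,
      |f (g • u • x₀) - f (g • x₀)| < ε) := by
  constructor
  · rintro ⟨Y, _, _, _, _, _, hSUC, ν, F, hν, hequiv, hF, hfF⟩ x₀ ε hε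
    have hUC : UniformContinuous F := CompactSpace.uniformContinuous_of_continuous hF
    have hη : ((fun p : Y × Y => (F p.1, F p.2)) ⁻¹' {p : ℝ × ℝ | dist p.1 p.2 < ε}) ∈ 𝓤 Y :=
      hUC (Metric.dist_mem_uniformity hε)
    obtain ⟨U, hU, h⟩ := hSUC (ν x₀) _ hη
    refine ⟨U, hU, fun g u hu => ?_⟩
    have hd := h g u hu
    have e1 : ν (g • u • x₀) = g • u • ν x₀ := by rw [hequiv, hequiv]
    have e2 : ν (g • x₀) = g • ν x₀ := hequiv g x₀
    have : |F (ν (g • u • x₀)) - F (ν (g • x₀))| < ε := by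
      rw [e1, e2]; simpa [Real.dist_eq] using hd
    simpa [hfF] using this
  · intro h2
    classical
    set ν : X → (G → ℝ) := fun x g => f (g • x) with hνdef
    have hνc : Continuous ν := continuous_pi fun g => hf.comp (continuous_const_smul g)
    have hraw : ∀ (h : G) (x : X), ν (h • x) = fun g => ν x (g * h) := by
      intro h x; funext g; simp [ν, mul_smul]
    letI : MulAction G ↥(Set.range ν) :=
      { smul := fun h φ => ⟨fun g => φ.1 (g * h), by
          obtain ⟨x, hx⟩ := φ.2
          exact ⟨h • x, by rw [hraw, hx]⟩⟩
        one_smul := fun φ => Subtype.ext (funext fun g => by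
          show φ.1 (g * 1) = φ.1 g; rw [mul_one])
        mul_smul := fun a b φ => Subtype.ext (funext fun g => by
          show φ.1 (g * (a * b)) = φ.1 (g * a * b); rw [mul_assoc]) }
    set q : X → ↥(Set.range ν) := fun x => ⟨ν x, Set.mem_range_self x⟩ with hqdef
    have hqc : Continuous q := hνc.subtype_mk _
    have hqsurj : Function.Surjective q := by
      rintro ⟨φ, x, rfl⟩; exact ⟨x, rfl⟩
    have hq_eq : ∀ (h : G) (x : X), q (h • x) = h • q x := by
      intro h x
      apply Subtype.ext
      show ν (h • x) = fun g => ν x (g * h)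
      exact hraw h x
    haveI : CompactSpace ↥(Set.range ν) :=
      isCompact_iff_compactSpace.mp (isCompact_range hνc)
    haveI : ContinuousSMul G ↥(Set.range ν) := by
      constructor
      have hqm : IsQuotientMap (Prod.map (id : G → G) q) :=
        (isProperMap_id.prodMap hqc.isProperMap).isClosedMap.isQuotientMap
          (continuous_id.prodMap hqc) (Function.surjective_id.prodMap hqsurj)
      rw [hqm.continuous_iff]
      have : ((fun p : G × ↥(Set.range ν) => p.1 • p.2) ∘ Prod.map (id : G → G) q)
          = fun p : G × X => q (p.1 • p.2) := by
        funext p; exact (hq_eq p.1 p.2).symm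
      rw [this]
      exact hqc.comp continuous_smul
    have hSUC : IsSUCFlow G ↥(Set.range ν) := by
      rintro ⟨φ, x₀, rfl⟩ ε hε
      let Fl : Filter (↥(Set.range ν) × ↥(Set.range ν)) :=
        { sets := {s | ∃ U ∈ 𝓝 (1 : G), ∀ g : G, ∀ u ∈ U,
            ((g • u • q x₀ : ↥(Set.range ν)), g • q x₀) ∈ s}
          univ_sets := ⟨Set.univ, univ_mem, fun _ _ _ => trivial⟩
          sets_of_superset := fun ⟨U, hU, hP⟩ hsub => ⟨U, hU, fun g u hu => hsub (hP g u hu)⟩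
          inter_sets := fun ⟨U₁, hU₁, h₁⟩ ⟨U₂, hU₂, h₂⟩ =>
            ⟨U₁ ∩ U₂, inter_mem hU₁ hU₂, fun g u hu => ⟨h₁ g u hu.1, h₂ g u hu.2⟩⟩ }
      have hle : Fl ≤ 𝓤 ↥(Set.range ν) := by
        rw [uniformity_subtype, Pi.uniformity, Filter.comap_iInf]
        refine le_iInf fun g => ?_
        rw [Filter.comap_comap, ← Filter.map_le_iff_le_comap]
        intro s hs
        obtain ⟨δ, hδ, hball⟩ := Metric.mem_uniformity_dist.mp hs
        obtain ⟨U, hU, hU2⟩ := h2 x₀ δ hδ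
        refine ⟨U, hU, fun h u hu => ?_⟩
        refine hball ?_
        show dist (((h • u • q x₀ : ↥(Set.range ν)) : G → ℝ) g)
          (((h • q x₀ : ↥(Set.range ν)) : G → ℝ) g) < δ
        have key := hU2 (g * h) u hu
        have e1 : ((h • u • q x₀ : ↥(Set.range ν)) : G → ℝ) g = f ((g * h) • u • x₀) := by
          show ν x₀ (g * h * u) = f ((g * h) • u • x₀)
          simp [ν, mul_smul]
        have e2 : ((h • q x₀ : ↥(Set.range ν)) : G → ℝ) g = f ((g * h) • x₀) := rfl
        rw [e1, e2, Real.dist_eq]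
        exact key
      exact hle hε
    refine ⟨↥(Set.range ν), inferInstance, inferInstance, inferInstance, inferInstance,
      inferInstance, hSUC, q, fun φ => (φ : G → ℝ) 1, hqc, hq_eq, ?_, ?_⟩
    · exact (continuous_apply (1 : G)).comp continuous_subtype_val
    · funext x
      show f x = ν x 1
      simp [ν]
end

section
/- Let G be a topological group and f : G → ℝ a bounded right uniformly continuous function. Then f is an SUC function if and only if every element ω of the cyclic system X_f is both left and right uniformly continuous. -/
open Filter Topology

universe u

variable (G : Type u) [Group G] [TopologicalSpace G]

/-- The cyclic system `X_f`: the closure in `ℝ^G` (product topology) of the set of right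
translates `h ↦ f (h * g)`. -/
def cyclicSystem (f : G → ℝ) : Set (G → ℝ) :=
  closure {ω : G → ℝ | ∃ g : G, ω = fun h => f (h * g)}

/-- Auxiliary: the cyclic system is invariant under right translation. -/
theorem cyclic_smul_mem (f : G → ℝ) (g : G) {ω : G → ℝ} (hω : ω ∈ cyclicSystem G f) :
    (fun h => ω (h * g)) ∈ cyclicSystem G f := by
  have hT : Continuous (fun (ω : G → ℝ) (h : G) => ω (h * g)) :=
    continuous_pi fun h => continuous_apply (h * g)
  have himg : (fun (ω : G → ℝ) (h : G) => ω (h * g)) ''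
      {ω : G → ℝ | ∃ a : G, ω = fun h => f (h * a)}
      ⊆ {ω : G → ℝ | ∃ a : G, ω = fun h => f (h * a)} := by
    rintro _ ⟨ω', ⟨a, rfl⟩, rfl⟩
    exact ⟨g * a, by funext h; simp [mul_assoc]⟩
  have h2 : (fun (ω : G → ℝ) (h : G) => ω (h * g)) '' cyclicSystem G f ⊆ cyclicSystem G f :=
    (image_closure_subset_closure_image hT).trans (closure_mono himg)
  exact h2 ⟨ω, hω, rfl⟩

/-- Auxiliary: uniform right uniform continuity over the whole cyclic system. -/
theorem cyclic_rightUC (f : G → ℝ) (hruc : RightUC G f) {ε : ℝ} (hε : 0 < ε) :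
    ∃ U ∈ nhds (1 : G), ∀ ω ∈ cyclicSystem G f, ∀ u ∈ U, ∀ g : G,
      |ω (u * g) - ω g| ≤ ε := by
  obtain ⟨U, hU, hUf⟩ := hruc ε hε
  refine ⟨U, hU, fun ω hω => ?_⟩
  have hcl : IsClosed {ω : G → ℝ | ∀ u ∈ U, ∀ g : G, |ω (u * g) - ω g| ≤ ε} := by
    have heq : {ω : G → ℝ | ∀ u ∈ U, ∀ g : G, |ω (u * g) - ω g| ≤ ε}
        = ⋂ u ∈ U, ⋂ g : G, {ω : G → ℝ | |ω (u * g) - ω g| ≤ ε} := by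
      ext ω; simp
    rw [heq]
    refine isClosed_biInter fun u _ => isClosed_iInter fun g => ?_
    exact isClosed_le (((continuous_apply (u * g)).sub (continuous_apply g)).abs)
      continuous_const
  have hsub : {ω : G → ℝ | ∃ a : G, ω = fun h => f (h * a)}
      ⊆ {ω : G → ℝ | ∀ u ∈ U, ∀ g : G, |ω (u * g) - ω g| ≤ ε} := by
    rintro _ ⟨a, rfl⟩ u hu g
    simpa [mul_assoc] using (hUf u hu (g * a)).le
  exact closure_minimal hsub hcl hω

/-- Auxiliary: basic entourages of the product uniformity on `ι → ℝ`. -/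
theorem pi_entourage_basis {ι : Type*} [Nonempty ι] {ε : Set ((ι → ℝ) × (ι → ℝ))}
    (hε : ε ∈ uniformity (ι → ℝ)) :
    ∃ (I : Finset ι) (δ : ℝ), 0 < δ ∧
      ∀ p : (ι → ℝ) × (ι → ℝ), (∀ i ∈ I, |p.1 i - p.2 i| < δ) → p ∈ ε := by
  rw [Pi.uniformity] at hε
  obtain ⟨I, hIfin, V, hV, hVuniv, -, rfl⟩ := Filter.mem_iInf'.1 hε
  have key : ∀ i : ι, ∃ δ : ℝ, 0 < δ ∧
      ∀ p : (ι → ℝ) × (ι → ℝ), |p.1 i - p.2 i| < δ → p ∈ V i := by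
    intro i
    by_cases hi : i ∈ I
    · obtain ⟨W, hW, hWV⟩ := Filter.mem_comap.1 (hV i)
      obtain ⟨δ, hδ, hδW⟩ := Metric.mem_uniformity_dist.1 hW
      exact ⟨δ, hδ, fun p hp => hWV (hδW (by rwa [Real.dist_eq]))⟩
    · exact ⟨1, one_pos, fun p _ => by simp [hVuniv i hi]⟩
  choose δ hδpos hδ using key
  obtain ⟨j⟩ := ‹Nonempty ι›
  classical
  refine ⟨insert j hIfin.toFinset,
    (insert j hIfin.toFinset).inf' ⟨j, Finset.mem_insert_self _ _⟩ δ, ?_, ?_⟩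
  · exact (Finset.lt_inf'_iff _).2 fun i _ => hδpos i
  · intro p hp
    refine Set.mem_iInter.2 fun i => ?_
    by_cases hi : i ∈ I
    · have hiF : i ∈ insert j hIfin.toFinset :=
        Finset.mem_insert_of_mem (hIfin.mem_toFinset.2 hi)
      exact hδ i p ((hp i hiF).trans_le (Finset.inf'_le _ hiF))
    · simp [hVuniv i hi]

/-- Auxiliary: the cyclic system is compact. -/
theorem cyclic_isCompact (f : G → ℝ) (hbd : ∃ M : ℝ, ∀ g : G, |f g| ≤ M) :
    IsCompact (cyclicSystem G f) := by
  obtain ⟨M, hM⟩ := hbd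
  have hsub : cyclicSystem G f ⊆ Set.pi Set.univ fun _ : G => Set.Icc (-M) M := by
    apply closure_minimal
    · rintro _ ⟨a, rfl⟩ h -
      exact abs_le.1 (hM _)
    · exact isClosed_set_pi fun i _ => isClosed_Icc
  exact IsCompact.of_isClosed_subset (isCompact_univ_pi fun _ => isCompact_Icc)
    isClosed_closure hsub

/-- The `G`-action on the cyclic system by right translation. -/
def cyclicAct (f : G → ℝ) : MulAction G ↥(cyclicSystem G f) where
  smul g ω := ⟨fun h => ω.1 (h * g), cyclic_smul_mem G f g ω.2⟩
  one_smul ω := Subtype.ext (funext fun h => show ω.1 (h * 1) = ω.1 h by rw [mul_one])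
  mul_smul a b ω := Subtype.ext (funext fun h =>
    show ω.1 (h * (a * b)) = ω.1 (h * a * b) by rw [mul_assoc])

/-- The action on the cyclic system is jointly continuous. -/
theorem cyclic_continuousSMul [IsTopologicalGroup G] (f : G → ℝ) (hruc : RightUC G f) :
    @ContinuousSMul G ↥(cyclicSystem G f) (cyclicAct G f).toSMul _ _ := by
  letI := cyclicAct G f
  constructor
  apply Continuous.subtype_mk (f := fun p : G × ↥(cyclicSystem G f) => fun h => p.2.1 (h * p.1))
  apply continuous_pi
  intro h
  rw [continuous_iff_continuousAt]
  rintro ⟨g₀, ω₀⟩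
  rw [ContinuousAt, Metric.tendsto_nhds]
  intro ε hε
  obtain ⟨U, hU, hA⟩ := cyclic_rightUC G f hruc (by positivity : (0:ℝ) < ε / 3)
  have hc : ContinuousAt (fun g : G => h * g * g₀⁻¹ * h⁻¹) g₀ := by fun_prop
  have hV₁ : (fun g : G => h * g * g₀⁻¹ * h⁻¹) ⁻¹' U ∈ nhds g₀ := by
    apply hc.preimage_mem_nhds
    simpa using hU
  have hV₂ : {ω : ↥(cyclicSystem G f) | |ω.1 (h * g₀) - ω₀.1 (h * g₀)| < ε / 3}
      ∈ nhds ω₀ := by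
    have hcont : Continuous fun ω : ↥(cyclicSystem G f) => ω.1 (h * g₀) :=
      (continuous_apply (h * g₀)).comp continuous_subtype_val
    have : IsOpen {ω : ↥(cyclicSystem G f) | |ω.1 (h * g₀) - ω₀.1 (h * g₀)| < ε / 3} := by
      have : {ω : ↥(cyclicSystem G f) | |ω.1 (h * g₀) - ω₀.1 (h * g₀)| < ε / 3}
          = (fun ω : ↥(cyclicSystem G f) => ω.1 (h * g₀)) ⁻¹'
            (Metric.ball (ω₀.1 (h * g₀)) (ε / 3)) := by
        ext ω; simp [Metric.mem_ball, Real.dist_eq]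
      rw [this]
      exact Metric.isOpen_ball.preimage hcont
    exact this.mem_nhds (by simp [abs_lt]; positivity)
  filter_upwards [prod_mem_nhds hV₁ hV₂] with p hp
  obtain ⟨hp₁, hp₂⟩ := hp
  have key : h * p.1 = (h * p.1 * g₀⁻¹ * h⁻¹) * (h * g₀) := by group
  have h1 : |p.2.1 (h * p.1) - p.2.1 (h * g₀)| ≤ ε / 3 := by
    have := hA p.2.1 p.2.2 _ hp₁ (h * g₀)
    rwa [← key] at this
  have h2 : |p.2.1 (h * g₀) - ω₀.1 (h * g₀)| < ε / 3 := hp₂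
  rw [Real.dist_eq]
  have : |p.2.1 (h * p.1) - ω₀.1 (h * g₀)|
      ≤ |p.2.1 (h * p.1) - p.2.1 (h * g₀)| + |p.2.1 (h * g₀) - ω₀.1 (h * g₀)| :=
    abs_sub_le _ _ _
  linarith

/-- The cyclic system flow is SUC when every element is left uniformly continuous. -/
theorem cyclic_isSUCFlow (f : G → ℝ) (hL : ∀ ω ∈ cyclicSystem G f, LeftUC G ω) :
    @IsSUCFlow G _ _ ↥(cyclicSystem G f) _ (cyclicAct G f) := by
  letI := cyclicAct G f
  haveI : Nonempty G := ⟨1⟩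
  intro x₀ ε hε
  rw [uniformity_subtype] at hε
  obtain ⟨ε', hε', hsub⟩ := Filter.mem_comap.1 hε
  obtain ⟨I, δ, hδ, hI⟩ := pi_entourage_basis hε'
  obtain ⟨U, hU, hULC⟩ := hL x₀.1 x₀.2 δ hδ
  refine ⟨U, hU, fun g u hu => hsub ?_⟩
  refine hI _ fun h _ => ?_
  show |x₀.1 (h * g * u) - x₀.1 (h * g)| < δ
  exact hULC u hu (h * g)

/-- A bounded right uniformly continuous `f : G → ℝ` is an SUC function iff
every element of the cyclic system `X_f` is both left and right uniformly continuous. -/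
theorem statement4 [IsTopologicalGroup G] (f : G → ℝ) (hbd : ∃ M : ℝ, ∀ g : G, |f g| ≤ M)
    (hruc : RightUC G f) :
    IsSUCFunction G f ↔ ∀ ω ∈ cyclicSystem G f, LeftUC G ω ∧ RightUC G ω := by
  constructor
  · rintro ⟨X, uX, cX, t2X, mX, csX, hflow, x₀, F, hFc, hFf⟩ ω hω
    letI := uX; letI := cX; letI := t2X; letI := mX; letI := csX
    constructor
    · -- LeftUC
      set Φ : X → (G → ℝ) := fun y h => F (h • y) with hΦ
      have hΦc : Continuous Φ :=
        continuous_pi fun h => hFc.comp (continuous_const_smul h)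
      have hrange : cyclicSystem G f ⊆ Set.range Φ := by
        apply closure_minimal
        · rintro _ ⟨a, rfl⟩
          refine ⟨a • x₀, ?_⟩
          funext h
          simp only [hΦ]
          rw [← mul_smul]
          exact (hFf (h * a)).symm
        · exact (isCompact_range hΦc).isClosed
      obtain ⟨y, hy⟩ := hrange hω
      intro ε hε
      have hFu : UniformContinuous F := CompactSpace.uniformContinuous_of_continuous hFc
      have hball : {p : ℝ × ℝ | dist p.1 p.2 < ε} ∈ uniformity ℝ :=
        Metric.dist_mem_uniformity hε
      obtain ⟨U, hU, hflowU⟩ := hflow y _ (hFu hball)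
      refine ⟨U, hU, fun u hu g => ?_⟩
      have hd := hflowU g u hu
      simp only [Set.mem_preimage, Set.mem_setOf_eq] at hd
      rw [← hy]
      show |F ((g * u) • y) - F (g • y)| < ε
      rw [mul_smul, ← Real.dist_eq]
      exact hd
    · -- RightUC
      intro ε hε
      obtain ⟨U, hU, hA⟩ := cyclic_rightUC G f hruc (half_pos hε)
      exact ⟨U, hU, fun u hu g => (hA ω hω u hu g).trans_lt (half_lt_self hε)⟩
  · intro h
    have hf_mem : f ∈ cyclicSystem G f :=
      subset_closure ⟨1, by funext h; rw [mul_one]⟩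
    refine ⟨↥(cyclicSystem G f), inferInstance,
      (isCompact_iff_compactSpace.mp (cyclic_isCompact G f hbd)), inferInstance,
      cyclicAct G f, cyclic_continuousSMul G f hruc,
      cyclic_isSUCFlow G f (fun ω hω => (h ω hω).1),
      ⟨f, hf_mem⟩, (fun ω => ω.1 1),
      (continuous_apply 1).comp continuous_subtype_val, fun g => ?_⟩
    show f g = f (1 * g)
    rw [one_mul]
end

section
/- Let G be a topological group, X a compact G-flow and a, b ∈ X a pair of SUC-proximal points: there exist a point x₀ ∈ X and nets (s_i) and (g_i) in G such that s_i converges to the identity e, g_i•x₀ converges to a, and g_i•(s_i•x₀) converges to b. Then f(a) = f(b) for every f ∈ SUC(X). -/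
open Filter Topology

universe u

variable (G : Type u) [Group G] [TopologicalSpace G]

/-- A continuous function on a `G`-space `X` belongs to `SUC(X)`: it factors through a
continuous `G`-map into a compact SUC `G`-flow. -/
def MemSUC {X : Type u} [TopologicalSpace X] [MulAction G X] (f : X → ℝ) : Prop :=
  ∃ (Y : Type u) (_ : UniformSpace Y) (_ : CompactSpace Y) (_ : T2Space Y)
    (_ : MulAction G Y) (_ : ContinuousSMul G Y),
    IsSUCFlow G Y ∧ ∃ (ν : X → Y) (F : Y → ℝ),
      Continuous ν ∧ (∀ (g : G) (x : X), ν (g • x) = g • ν x) ∧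
      Continuous F ∧ f = F ∘ ν

/-- If `a, b` are SUC-proximal points of a compact `G`-flow `X` (there are a
point `x₀ ∈ X` and nets `s_i → e`, `g_i • x₀ → a`, `g_i • (s_i • x₀) → b`, nets being
encoded by functions along a nontrivial filter), then `f a = f b` for every
`f ∈ SUC(X)`. -/
theorem statement5 [IsTopologicalGroup G] {X : Type u} [TopologicalSpace X] [CompactSpace X]
    [T2Space X] [MulAction G X] [ContinuousSMul G X] (a b : X)
    (hprox : ∃ (x₀ : X) (ι : Type u) (l : Filter ι), l.NeBot ∧ ∃ s g : ι → G,
      Tendsto s l (nhds (1 : G)) ∧ Tendsto (fun i => g i • x₀) l (nhds a) ∧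
      Tendsto (fun i => g i • s i • x₀) l (nhds b))
    (f : X → ℝ) (hf : MemSUC G f) :
    f a = f b := by
  obtain ⟨x₀, ι, l, hl, s, g, hs, ha, hb⟩ := hprox
  obtain ⟨Y, _, _, _, _, _, hSUC, ν, F, hν, hequiv, hF, hfF⟩ := hf
  have ha' : Tendsto (fun i => g i • ν x₀) l (nhds (ν a)) :=
    ((hν.tendsto a).comp ha).congr fun i => by simp [Function.comp, hequiv]
  have hb' : Tendsto (fun i => g i • s i • ν x₀) l (nhds (ν b)) :=
    ((hν.tendsto b).comp hb).congr fun i => by simp [Function.comp, hequiv]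
  have huni : Tendsto (fun i => (g i • s i • ν x₀, g i • ν x₀)) l (uniformity Y) := by
    intro ε hε
    obtain ⟨U, hU, hUε⟩ := hSUC (ν x₀) ε hε
    rw [Filter.mem_map]
    have hsU : ∀ᶠ i in l, s i ∈ U := hs hU
    filter_upwards [hsU] with i hi
    exact hUε (g i) (s i) hi
  have huni2 : Tendsto (fun i => (g i • ν x₀, g i • s i • ν x₀)) l (uniformity Y) :=
    tendsto_swap_uniformity.comp huni
  have hb'' : Tendsto (fun i => g i • s i • ν x₀) l (nhds (ν a)) :=
    ha'.congr_uniformity huni2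
  have : ν a = ν b := tendsto_nhds_unique hb'' hb'
  simp [hfF, Function.comp, this]
end

section
/- Let G be a topological group and H a closed subgroup such that the coset space G/H (with the quotient topology and the left translation action of G) is compact. If the compact G-flow G/H is SUC, then it is equicontinuous: for every entourage ε of the unique uniformity of G/H there is an entourage δ such that (g•x, g•y) ∈ ε for all g ∈ G whenever (x, y) ∈ δ. -/
open Filter Topology Uniformity

/-- Let `H` be a closed subgroup of a topological group `G` such that the
coset space `G ⧸ H` (with the quotient topology and left translation action) is compact,
and let `u` be the (unique) uniformity on `G ⧸ H` compatible with the quotient topology.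
If the compact `G`-flow `G ⧸ H` is SUC then it is equicontinuous. -/
theorem statement6 {G : Type*} [Group G] [TopologicalSpace G] [IsTopologicalGroup G]
    (H : Subgroup G) (hH : IsClosed (H : Set G)) [CompactSpace (G ⧸ H)]
    (u : UniformSpace (G ⧸ H))
    (hu : u.toTopologicalSpace = (inferInstance : TopologicalSpace (G ⧸ H)))
    (hSUC : ∀ x₀ : G ⧸ H, ∀ ε ∈ @uniformity (G ⧸ H) u, ∃ U ∈ nhds (1 : G),
      ∀ g : G, ∀ v ∈ U, (g • v • x₀, g • x₀) ∈ ε) :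
    ∀ ε ∈ @uniformity (G ⧸ H) u, ∃ δ ∈ @uniformity (G ⧸ H) u,
      ∀ x y : G ⧸ H, (x, y) ∈ δ → ∀ g : G, (g • x, g • y) ∈ ε := by
  intro ε hε
  letI U' : UniformSpace (G ⧸ H) := u.replaceTopology hu.symm
  have hU'eq : U' = u := u.replaceTopology_eq hu.symm
  have hε' : ε ∈ 𝓤 (G ⧸ H) := by rw [show 𝓤 (G ⧸ H) = @uniformity _ u from congrArg _ hU'eq]; exact hε
  obtain ⟨ε₁, hε₁, hsymm, hcomp⟩ := comp_symm_mem_uniformity_sets hε'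
  -- For each point, a neighborhood moving uniformly close under all g
  have key : ∀ x : G ⧸ H, ∃ W : Set (G ⧸ H), W ∈ 𝓝 x ∧
      ∀ y ∈ W, ∀ g : G, (g • y, g • x) ∈ ε₁ := by
    intro x
    obtain ⟨g₀, rfl⟩ := QuotientGroup.mk_surjective x
    obtain ⟨U, hU, hprop⟩ := hSUC (QuotientGroup.mk g₀) ε₁
      (by rw [← show 𝓤 (G ⧸ H) = @uniformity _ u from congrArg _ hU'eq]; exact hε₁)
    refine ⟨QuotientGroup.mk '' ((· * g₀) '' U), ?_, ?_⟩
    · have h1 : (· * g₀) '' U ∈ 𝓝 (1 * g₀) :=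
        (Homeomorph.mulRight g₀).isOpenMap.image_mem_nhds hU
      rw [one_mul] at h1
      exact (QuotientGroup.isOpenMap_coe (N := H)).image_mem_nhds h1
    · rintro y ⟨a, ⟨v, hv, rfl⟩, rfl⟩ g
      have h2 : (QuotientGroup.mk (v * g₀) : G ⧸ H) = v • QuotientGroup.mk g₀ := rfl
      rw [h2]
      exact hprop g v hv
  choose W hWnhds hWprop using key
  haveI : CompactSpace (G ⧸ H) := ‹_›
  obtain ⟨δ, hδ, hball⟩ := lebesgue_number_lemma (U := fun x => interior (W x))
    (K := Set.univ) isCompact_univ (fun _ => isOpen_interior)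
    (fun x _ => Set.mem_iUnion.2 ⟨x, mem_interior_iff_mem_nhds.2 (hWnhds x)⟩)
  refine ⟨δ, by rw [← show 𝓤 (G ⧸ H) = @uniformity _ u from congrArg _ hU'eq]; exact hδ,
    fun x y hxy g => ?_⟩
  obtain ⟨z, hz⟩ := hball x (Set.mem_univ x)
  have hx : x ∈ W z := interior_subset (hz (UniformSpace.mem_ball_self x hδ))
  have hy : y ∈ W z := interior_subset (hz hxy)
  exact hcomp ⟨g • z, hWprop z x hx g, hsymm.symm _ _ (hWprop z y hy g)⟩
end

section
/- Let G be a second countable topological group and X a G-space (a topological space with a jointly continuous G-action). Suppose there exists x₀ ∈ X whose orbit Y = G•x₀ is dense in X and uncountable, and that the action is 2-homogeneous on Y: for all a₁, a₂ ∈ Y with a₁ ≠ a₂ and all b₁, b₂ ∈ Y with b₁ ≠ b₂ there exists g ∈ G with g•a₁ = b₁ and g•a₂ = b₂. Then every f ∈ SUC(X) is constant. -/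
open Filter Topology

universe u

variable (G : Type u) [Group G] [TopologicalSpace G]

/-- Let `G` be a second countable topological group acting continuously on
a space `X` with a dense uncountable orbit `G • x₀` on which the action is 2-homogeneous.
Then every `f ∈ SUC(X)` is constant. -/
theorem statement14 {G : Type u} [Group G] [TopologicalSpace G] [IsTopologicalGroup G]
    [SecondCountableTopology G]
    {X : Type u} [TopologicalSpace X] [MulAction G X] [ContinuousSMul G X]
    (x₀ : X) (hdense : Dense (MulAction.orbit G x₀))
    (huncountable : ¬ (MulAction.orbit G x₀).Countable)
    (h2hom : ∀ a₁ a₂ : X, a₁ ∈ MulAction.orbit G x₀ → a₂ ∈ MulAction.orbit G x₀ →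
      a₁ ≠ a₂ → ∀ b₁ b₂ : X, b₁ ∈ MulAction.orbit G x₀ → b₂ ∈ MulAction.orbit G x₀ →
      b₁ ≠ b₂ → ∃ g : G, g • a₁ = b₁ ∧ g • a₂ = b₂)
    (f : X → ℝ) (hcont : Continuous f) (hf : MemSUC G f) :
    ∀ x y : X, f x = f y := by

  classical
  obtain ⟨Y, _, _, _, _, _, hSUC, ν, F, hν, hequiv, hFc, hfF⟩ := hf
  suffices hconst : Set.EqOn f (fun _ => f x₀) (MulAction.orbit G x₀) by
    have hEq := Continuous.ext_on hdense hcont continuous_const hconst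
    intro x y
    calc f x = f x₀ := congrFun hEq x
    _ = f y := (congrFun hEq y).symm
  by_contra hc
  simp only [Set.EqOn] at hc
  push_neg at hc
  obtain ⟨a, ha, hfa⟩ := hc
  set δ := dist (f a) (f x₀) with hδdef
  have hδ : 0 < δ := dist_pos.2 hfa
  have haneq : a ≠ x₀ := fun h => hfa (by rw [h])
  have hFu : UniformContinuous F := CompactSpace.uniformContinuous_of_continuous hFc
  have hε : {p : Y × Y | dist (F p.1) (F p.2) < δ/3} ∈ uniformity Y := by
    have := Filter.mem_map.1 (hFu (Metric.dist_mem_uniformity (by positivity : (0:ℝ) < δ/3)))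
    exact this
  obtain ⟨U, hU, hSUCU⟩ := hSUC (ν x₀) _ hε
  obtain ⟨V, hVU, hVopen, hV1⟩ := mem_nhds_iff.1 hU
  obtain ⟨D, hDc, hDd⟩ := TopologicalSpace.exists_countable_dense G
  have hcover : MulAction.orbit G x₀ ⊆ ⋃ d ∈ D, (fun v => (d * v) • x₀) '' V := by
    rintro _ ⟨g, rfl⟩
    have hO : IsOpen ((fun d : G => d⁻¹ * g) ⁻¹' V) :=
      hVopen.preimage (by continuity)
    have hne : ((fun d : G => d⁻¹ * g) ⁻¹' V).Nonempty :=
      ⟨g, by simpa using hV1⟩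
    obtain ⟨d, hdD, hdO⟩ := hDd.exists_mem_open hO hne
    refine Set.mem_biUnion hdD ⟨d⁻¹ * g, hdO, ?_⟩
    simp [mul_smul]
  have hex : ∃ d ∈ D, ¬ ((fun v : G => (d * v) • x₀) '' V).Countable := by
    by_contra h
    push_neg at h
    exact huncountable ((Set.Countable.biUnion hDc h).mono hcover)
  obtain ⟨d, -, hdnc⟩ := hex
  have hnt : ((fun v : G => (d * v) • x₀) '' V).Nontrivial := by
    rw [← Set.not_subsingleton_iff]
    exact fun h => hdnc h.countable
  obtain ⟨p₁, hp₁, p₂, hp₂, hpne⟩ := hnt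
  obtain ⟨v₁, hv₁, rfl⟩ := hp₁
  obtain ⟨v₂, hv₂, rfl⟩ := hp₂
  obtain ⟨g, hg1, hg2⟩ := h2hom _ _ ⟨d * v₁, rfl⟩ ⟨d * v₂, rfl⟩ hpne a x₀ ha
    (MulAction.mem_orbit_self x₀) haneq
  have key : ∀ (h : G) (u : G), u ∈ U → dist (f ((h * u) • x₀)) (f (h • x₀)) < δ/3 := by
    intro h u hu
    have hmem := hSUCU h u hu
    have e1 : f ((h * u) • x₀) = F (h • u • ν x₀) := by
      rw [hfF]
      simp only [Function.comp_apply, mul_smul, hequiv]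
    have e2 : f (h • x₀) = F (h • ν x₀) := by
      rw [hfF]
      simp only [Function.comp_apply, hequiv]
    rw [e1, e2]
    exact hmem
  have ea : ((g * d) * v₁) • x₀ = a := by
    rw [mul_assoc, mul_smul]; exact hg1
  have ex0 : ((g * d) * v₂) • x₀ = x₀ := by
    rw [mul_assoc, mul_smul]; exact hg2
  have k1 : dist (f a) (f ((g * d) • x₀)) < δ/3 := by
    rw [← ea]; exact key (g * d) v₁ (hVU hv₁)
  have k2 : dist (f x₀) (f ((g * d) • x₀)) < δ/3 := by
    nth_rewrite 1 [← ex0]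
    exact key (g * d) v₂ (hVU hv₂)
  have htri : δ ≤ dist (f a) (f ((g * d) • x₀)) + dist (f ((g * d) • x₀)) (f x₀) :=
    dist_triangle _ _ _
  rw [dist_comm (f ((g * d) • x₀)) (f x₀)] at htri
  linarith
end

section
/- Let G = S(ℕ) act on the one-point compactification ℕ* = ℕ ∪ {∞} by σ•n = σ(n) for n ∈ ℕ and σ•∞ = ∞. Then the closure, in the product space (ℕ*)^{ℕ*} (pointwise convergence topology), of the set of translation maps {x ↦ σ•x : σ ∈ S(ℕ)} is exactly the set of all maps p : ℕ* → ℕ* such that p(∞) = ∞ and the restriction of p to the set A = {n ∈ ℕ : p(n) ≠ ∞} is an injection of A into ℕ. Moreover, every map in this closure is continuous. -/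
open Filter Topology OnePoint

/-- An equiv between two infinite subsets of ℕ. -/
noncomputable def eqvOfInfinite (s t : Set ℕ) (hs : s.Infinite) (ht : t.Infinite) : s ≃ t := by
  classical
  haveI := hs.to_subtype
  haveI := ht.to_subtype
  haveI := Nat.Subtype.denumerable s
  haveI := Nat.Subtype.denumerable t
  exact (Denumerable.eqv s).trans (Denumerable.eqv t).symm

/-- Any injection on a finite set of ℕ extends to a permutation of ℕ. -/
theorem exists_perm_extend (s : Set ℕ) (hs : s.Finite) (g : ℕ → ℕ) (hg : Set.InjOn g s) :
    ∃ σ : Equiv.Perm ℕ, ∀ n ∈ s, σ n = g n := by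
  classical
  set t : Set ℕ := g '' s with ht
  have htf : t.Finite := hs.image g
  have hsc : (sᶜ : Set ℕ).Infinite := hs.infinite_compl
  have htc : (tᶜ : Set ℕ).Infinite := htf.infinite_compl
  let b : s ≃ t := Equiv.Set.imageOfInjOn g s hg
  let c : (sᶜ : Set ℕ) ≃ (tᶜ : Set ℕ) := eqvOfInfinite _ _ hsc htc
  refine ⟨(Equiv.Set.sumCompl s).symm.trans ((b.sumCongr c).trans (Equiv.Set.sumCompl t)), ?_⟩
  intro n hn
  simp only [Equiv.trans_apply]
  rw [Equiv.Set.sumCompl_symm_apply_of_mem hn]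
  simp [b, Equiv.Set.imageOfInjOn]

theorem isOpen_coe_singleton (k : ℕ) : IsOpen ({(↑k : OnePoint ℕ)} : Set (OnePoint ℕ)) := by
  rw [show ({(↑k : OnePoint ℕ)} : Set (OnePoint ℕ)) = (↑) '' {k} from (Set.image_singleton).symm]
  exact OnePoint.isOpen_image_coe.2 (isOpen_discrete _)

/-- The closure, in the product space `(ℕ*)^(ℕ*)` of pointwise convergence
on the one-point compactification `ℕ* = ℕ ∪ {∞}`, of the set of translation maps
`x ↦ σ • x` (`σ • n = σ n`, `σ • ∞ = ∞`) of the permutation group `S(ℕ)` is exactly the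
set of maps `p` with `p ∞ = ∞` whose restriction to `A = {n : p n ≠ ∞}` is an injection
of `A` into `ℕ`; moreover every map in this closure is continuous. -/
theorem statement15 :
    (closure {p : OnePoint ℕ → OnePoint ℕ | ∃ σ : Equiv.Perm ℕ, p = OnePoint.map ⇑σ} =
      {p : OnePoint ℕ → OnePoint ℕ | p ∞ = ∞ ∧
        ∀ m n : ℕ, p ↑m ≠ ∞ → p ↑n ≠ ∞ → p ↑m = p ↑n → m = n}) ∧
    ∀ p ∈ closure {p : OnePoint ℕ → OnePoint ℕ | ∃ σ : Equiv.Perm ℕ, p = OnePoint.map ⇑σ},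
      Continuous p := by
  classical
  set S := {p : OnePoint ℕ → OnePoint ℕ | ∃ σ : Equiv.Perm ℕ, p = OnePoint.map ⇑σ} with hS
  set R := {p : OnePoint ℕ → OnePoint ℕ | p ∞ = ∞ ∧
      ∀ m n : ℕ, p ↑m ≠ ∞ → p ↑n ≠ ∞ → p ↑m = p ↑n → m = n} with hR
  -- R is closed
  have h1 : IsClosed {p : OnePoint ℕ → OnePoint ℕ | p ∞ = ∞} := by
    have : {p : OnePoint ℕ → OnePoint ℕ | p ∞ = ∞} = (fun p : OnePoint ℕ → OnePoint ℕ => p ∞) ⁻¹' {∞} := rfl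
    rw [this]
    exact OnePoint.isClosed_infty.preimage (continuous_apply _)
  have h2 : ∀ m n : ℕ,
      IsClosed {p : OnePoint ℕ → OnePoint ℕ | p ↑m ≠ ∞ → p ↑n ≠ ∞ → p ↑m = p ↑n → m = n} := by
    intro m n
    by_cases hmn : m = n
    · have : {p : OnePoint ℕ → OnePoint ℕ | p ↑m ≠ ∞ → p ↑n ≠ ∞ → p ↑m = p ↑n → m = n} = Set.univ := by
        ext p; simp [hmn]
      rw [this]; exact isClosed_univ
    · have : {p : OnePoint ℕ → OnePoint ℕ | p ↑m ≠ ∞ → p ↑n ≠ ∞ → p ↑m = p ↑n → m = n} =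
        (⋃ k : ℕ, ((fun p : OnePoint ℕ → OnePoint ℕ => p ↑m) ⁻¹' {(↑k : OnePoint ℕ)}) ∩
          ((fun p : OnePoint ℕ → OnePoint ℕ => p ↑n) ⁻¹' {(↑k : OnePoint ℕ)}))ᶜ := by
        ext p
        simp only [Set.mem_compl_iff, Set.mem_iUnion, Set.mem_inter_iff, Set.mem_preimage,
          Set.mem_singleton_iff, Set.mem_setOf_eq, not_exists, not_and]
        constructor
        · intro h k h1 h2
          exact absurd (h (by simp [h1]) (by simp [h2]) (h1.trans h2.symm)) hmn
        · intro h hm hn heq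
          obtain ⟨k, hk⟩ := OnePoint.ne_infty_iff_exists.mp hm
          exact absurd (heq ▸ hk.symm) (h k hk.symm)
      rw [this]
      exact (isOpen_iUnion fun k =>
        ((isOpen_coe_singleton k).preimage (continuous_apply _)).inter
          ((isOpen_coe_singleton k).preimage (continuous_apply _))).isClosed_compl
  have hclosed : IsClosed R := by
    have : R = {p : OnePoint ℕ → OnePoint ℕ | p ∞ = ∞} ∩
        ⋂ m : ℕ, ⋂ n : ℕ, {p : OnePoint ℕ → OnePoint ℕ | p ↑m ≠ ∞ → p ↑n ≠ ∞ → p ↑m = p ↑n → m = n} := by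
      ext p
      simp only [hR, Set.mem_inter_iff, Set.mem_iInter, Set.mem_setOf_eq]
    rw [this]
    exact h1.inter (isClosed_iInter fun m => isClosed_iInter fun n => h2 m n)
  -- S ⊆ R
  have hSR : S ⊆ R := by
    rintro p ⟨σ, rfl⟩
    refine ⟨rfl, fun m n _ _ h => ?_⟩
    simp only [OnePoint.map_some] at h
    exact σ.injective (OnePoint.coe_injective h)
  -- R ⊆ closure S
  have hRc : R ⊆ closure S := by
    intro p hp
    obtain ⟨hpinf, hpinj⟩ := hp
    rw [mem_closure_iff_nhds]
    intro U hU
    rw [nhds_pi, Filter.mem_pi'] at hU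
    obtain ⟨I, t, ht, htU⟩ := hU
    -- finite sets involved
    have hE : {n : ℕ | (↑n : OnePoint ℕ) ∈ I}.Finite :=
      I.finite_toSet.preimage (OnePoint.coe_injective.injOn)
    set E : Set ℕ := {n : ℕ | (↑n : OnePoint ℕ) ∈ I} with hEdef
    -- for each n ∈ E with p ↑n = ∞, choose a finite avoid set
    have hchoice : ∀ n : ℕ, ∃ s : Set ℕ, s.Finite ∧
        (((↑n : OnePoint ℕ) ∈ I ∧ p ↑n = ∞) → (↑) '' sᶜ ∪ {∞} ⊆ t ↑n) := by
      intro n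
      by_cases hn : (↑n : OnePoint ℕ) ∈ I ∧ p ↑n = ∞
      · have htn : t ↑n ∈ 𝓝 (∞ : OnePoint ℕ) := hn.2 ▸ ht ↑n
        obtain ⟨s, ⟨_, hsc⟩, hsub⟩ := (OnePoint.hasBasis_nhds_infty).mem_iff.mp htn
        exact ⟨s, hsc.finite_of_discrete, fun _ => hsub⟩
      · exact ⟨∅, Set.finite_empty, fun h => absurd h hn⟩
    choose sf hsffin hsf using hchoice
    -- forbidden set
    set K : Set ℕ := ⋃ n ∈ E, sf n with hKdef
    have hKfin : K.Finite := hE.biUnion fun n _ => hsffin n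
    -- value function for finite values
    have hval : ∀ n : ℕ, ∃ k : ℕ, p ↑n ≠ ∞ → (↑k : OnePoint ℕ) = p ↑n := by
      intro n
      by_cases h : p ↑n = ∞
      · exact ⟨0, fun h' => absurd h h'⟩
      · obtain ⟨k, hk⟩ := OnePoint.ne_infty_iff_exists.mp h
        exact ⟨k, fun _ => hk⟩
    choose v hv using hval
    set V : Set ℕ := v '' E with hVdef
    have hVfin : V.Finite := hE.image v
    set C : Set ℕ := K ∪ V with hCdef
    have hCfin : C.Finite := hKfin.union hVfin
    have hW : (Cᶜ : Set ℕ).Infinite := hCfin.infinite_compl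
    haveI := hW.to_subtype
    haveI := Nat.Subtype.denumerable (Cᶜ : Set ℕ)
    set e : (Cᶜ : Set ℕ) ≃ ℕ := Denumerable.eqv _ with hedef
    set g : ℕ → ℕ := fun n => if p ↑n = ∞ then (e.symm n : ℕ) else v n with hgdef
    have hginj : Set.InjOn g E := by
      intro a ha b hb hab
      simp only [hgdef] at hab
      by_cases hpa : p ↑a = ∞ <;> by_cases hpb : p ↑b = ∞
      · rw [if_pos hpa, if_pos hpb] at hab
        exact e.symm.injective (Subtype.ext hab)
      · rw [if_pos hpa, if_neg hpb] at hab
        have h1 : ((e.symm a : ℕ)) ∈ (Cᶜ : Set ℕ) := (e.symm a).2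
        have h2 : v b ∈ C := Or.inr ⟨b, hb, rfl⟩
        exact absurd (hab ▸ h2) h1
      · rw [if_neg hpa, if_pos hpb] at hab
        have h1 : ((e.symm b : ℕ)) ∈ (Cᶜ : Set ℕ) := (e.symm b).2
        have h2 : v a ∈ C := Or.inr ⟨a, ha, rfl⟩
        exact absurd (hab ▸ h2) h1
      · rw [if_neg hpa, if_neg hpb] at hab
        exact hpinj a b hpa hpb ((hv a hpa).symm.trans (hab ▸ hv b hpb))
    obtain ⟨σ, hσ⟩ := exists_perm_extend E hE g hginj
    refine ⟨OnePoint.map ⇑σ, htU ?_, ⟨σ, rfl⟩⟩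
    intro x hx
    match x with
    | ∞ =>
      have : OnePoint.map (⇑σ) ∞ = p ∞ := hpinf.symm
      rw [this]
      exact mem_of_mem_nhds (ht ∞)
    | (n : ℕ) =>
      have hnE : n ∈ E := hx
      have hm : OnePoint.map (⇑σ) ↑n = ↑(g n) := by rw [OnePoint.map_some, hσ n hnE]
      rw [hm]
      by_cases hpn : p ↑n = ∞
      · apply hsf n ⟨hnE, hpn⟩
        refine Or.inl ⟨g n, ?_, rfl⟩
        have hgC : g n ∈ (Cᶜ : Set ℕ) := by
          simp only [hgdef, if_pos hpn]
          exact (e.symm n).2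
        intro hmem
        exact hgC (Or.inl (Set.mem_biUnion hnE hmem))
      · have : (↑(g n) : OnePoint ℕ) = p ↑n := by
          simp only [hgdef, if_neg hpn]; exact hv n hpn
        rw [this]
        exact mem_of_mem_nhds (ht ↑n)
  have heq : closure S = R := le_antisymm (hclosed.closure_subset_iff.mpr hSR) hRc
  refine ⟨heq, ?_⟩
  intro p hp
  rw [heq] at hp
  obtain ⟨hpinf, hpinj⟩ := hp
  rw [continuous_iff_continuousAt]
  intro x
  match x with
  | (n : ℕ) =>
    have hpure : 𝓝 ((n : ℕ) : OnePoint ℕ) = pure ↑n := by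
      rw [OnePoint.nhds_coe_eq, nhds_discrete, Filter.map_pure]
    rw [ContinuousAt, hpure]
    exact tendsto_pure_nhds _ _
  | ∞ =>
    rw [OnePoint.continuousAt_infty', coclosedCompact_eq_cocompact, cocompact_eq_atTop (α := ℕ),
      ← Nat.cofinite_eq_atTop, hpinf]
    rw [OnePoint.hasBasis_nhds_infty.tendsto_right_iff]
    rintro s ⟨-, hsc⟩
    have hsfin : s.Finite := hsc.finite_of_discrete
    have hfin : ((fun n : ℕ => p ↑n) ⁻¹' ((↑) '' s : Set (OnePoint ℕ))).Finite := by
      apply Set.Finite.preimage _ (hsfin.image _)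
      intro a ha b hb hab
      simp only [Set.mem_preimage] at ha hb
      refine hpinj a b ?_ ?_ hab
      · obtain ⟨k, -, hk⟩ := ha; exact fun hc => OnePoint.coe_ne_infty k (hk.trans hc)
      · obtain ⟨k, -, hk⟩ := hb; exact fun hc => OnePoint.coe_ne_infty k (hk.trans hc)
    rw [Filter.eventually_cofinite]
    apply hfin.subset
    intro n hn
    simp only [Set.mem_setOf_eq, Function.comp_apply] at hn
    simp only [Set.mem_preimage]
    by_cases h : p ↑n = ∞
    · exact absurd (Or.inr h) hn
    · obtain ⟨k, hk⟩ := OnePoint.ne_infty_iff_exists.mp h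
      by_cases hks : k ∈ s
      · exact ⟨k, hks, hk⟩
      · exact absurd (Or.inl ⟨k, hks, hk⟩) hn
end
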